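/- Under the standing assumptions, let A be a bounded linear operator on L²(M, μ; X) and let 𝔄 : M → B(X) be a family of bounded linear operators on X such that for every F ∈ L²(M, μ; X) one has (A F)(x) = 𝔄(x)(F(x)) for μ-a.e. x. If 𝔄(x)(C) ⊆ C for μ-a.e. x, then A maps 𝒬 into 𝒬, i.e., A is positivity preserving with respect to the Hilbert cone 𝒬. -/

import Mathlib

open scoped ComplexOrder
open MeasureTheory
open scoped ENNReal

/-- A *Hilbert cone* in a complex Hilbert space `X`. -/
def IsHilbertCone {X : Type*} [NormedAddCommGroup X] [InnerProductSpace ℂ X]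
    (C : Set X) : Prop :=
  IsClosed C ∧ Convex ℝ C ∧
    (∀ (c : ℝ), 0 ≤ c → ∀ u ∈ C, c • u ∈ C) ∧
    (∀ u ∈ C, ∀ v ∈ C, (0 : ℂ) ≤ (inner ℂ u v : ℂ)) ∧
    (∀ w : X, ∃ u ∈ C, ∃ v ∈ C, ∃ u' ∈ C, ∃ v' ∈ C,
      w = u - v + Complex.I • (u' - v') ∧
        (inner ℂ u v : ℂ) = 0 ∧ (inner ℂ u' v' : ℂ) = 0)

/-- The conical hull of a set: all finite sums with nonnegative real coefficients. -/
def conicalCombinations {V : Type*} [AddCommMonoid V] [Module ℝ V] (s : Set V) : Set V :=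
  {v | ∃ (k : ℕ) (a : Fin k → ℝ) (x : Fin k → V),
    (∀ i, 0 ≤ a i) ∧ (∀ i, x i ∈ s) ∧ v = ∑ i, a i • x i}
lemma conical_zero {V : Type*} [AddCommMonoid V] [Module ℝ V] (s : Set V) :
    (0 : V) ∈ conicalCombinations s :=
  ⟨0, Fin.elim0, Fin.elim0, fun i => i.elim0, fun i => i.elim0, by simp⟩

lemma conical_mem {V : Type*} [AddCommMonoid V] [Module ℝ V] {s : Set V} {v : V} (hv : v ∈ s) :
    v ∈ conicalCombinations s :=
  ⟨1, fun _ => 1, fun _ => v, fun _ => zero_le_one, fun _ => hv, by simp⟩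

lemma conical_add {V : Type*} [AddCommMonoid V] [Module ℝ V] {s : Set V} {u v : V}
    (hu : u ∈ conicalCombinations s) (hv : v ∈ conicalCombinations s) :
    u + v ∈ conicalCombinations s := by
  obtain ⟨k, a, x, ha, hx, rfl⟩ := hu
  obtain ⟨l, b, y, hb, hy, rfl⟩ := hv
  refine ⟨k + l, Fin.append a b, Fin.append x y, ?_, ?_, ?_⟩
  · exact fun i => i.addCases (fun j => by simpa using ha j) (fun j => by simpa using hb j)
  · exact fun i => i.addCases (fun j => by simpa using hx j) (fun j => by simpa using hy j)
  · rw [Fin.sum_univ_add]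
    simp

lemma conical_smul {V : Type*} [AddCommMonoid V] [Module ℝ V] {s : Set V} {u : V} {c : ℝ}
    (hc : 0 ≤ c) (hu : u ∈ conicalCombinations s) : c • u ∈ conicalCombinations s := by
  obtain ⟨k, a, x, ha, hx, rfl⟩ := hu
  exact ⟨k, fun i => c * a i, x, fun i => mul_nonneg hc (ha i), hx, by
    rw [Finset.smul_sum]; simp [mul_smul]⟩

theorem decomposable_posPreserving
    {M : Type*} [MeasurableSpace M] (μ : Measure M) [SigmaFinite μ]
    [TopologicalSpace.SeparableSpace (Lp ℂ 2 μ)]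
    {X : Type*} [NormedAddCommGroup X] [InnerProductSpace ℂ X] [CompleteSpace X]
    [TopologicalSpace.SeparableSpace X]
    (C : Set X) (hC : IsHilbertCone C)
    (A : Lp X 2 μ →L[ℂ] Lp X 2 μ) (𝔄 : M → (X →L[ℂ] X))
    (hfib : ∀ F : Lp X 2 μ, ∀ᵐ x ∂μ, A F x = 𝔄 x (F x))
    (hpos : ∀ᵐ x ∂μ, ∀ u ∈ C, 𝔄 x u ∈ C) :
    ∀ F ∈ closure (conicalCombinations
      {G : Lp X 2 μ | ∃ φ ∈ C, ∃ f : Lp ℂ 2 μ,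
        (∀ᵐ x ∂μ, (0 : ℂ) ≤ f x) ∧ (∀ᵐ x ∂μ, G x = f x • φ)}),
      A F ∈ closure (conicalCombinations
        {G : Lp X 2 μ | ∃ φ ∈ C, ∃ f : Lp ℂ 2 μ,
          (∀ᵐ x ∂μ, (0 : ℂ) ≤ f x) ∧ (∀ᵐ x ∂μ, G x = f x • φ)}) := by
  obtain ⟨hCclosed, hCconvex, hCsmul, hCinner, hCdecomp⟩ := hC
  set S : Set (Lp X 2 μ) := {G : Lp X 2 μ | ∃ φ ∈ C, ∃ f : Lp ℂ 2 μ,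
        (∀ᵐ x ∂μ, (0 : ℂ) ≤ f x) ∧ (∀ᵐ x ∂μ, G x = f x • φ)} with hS
  set Q : Set (Lp X 2 μ) := closure (conicalCombinations S) with hQ
  -- basic facts about C
  have h0C : (0 : X) ∈ C := by
    obtain ⟨u, hu, -⟩ := hCdecomp 0
    simpa using hCsmul 0 le_rfl u hu
  -- closure properties of Q
  have hQ0 : (0 : Lp X 2 μ) ∈ Q := subset_closure (conical_zero S)
  have hQadd : ∀ u ∈ Q, ∀ v ∈ Q, u + v ∈ Q := fun u hu v hv =>
    map_mem_closure₂ continuous_add hu hv fun a ha b hb => conical_add ha hb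
  have hQsmul : ∀ (c : ℝ), 0 ≤ c → ∀ u ∈ Q, c • u ∈ Q := fun c hc u hu =>
    map_mem_closure (continuous_const_smul c) hu fun a ha => conical_smul hc ha
  -- measurability setup on X
  letI : MeasurableSpace X := borel X
  haveI : BorelSpace X := ⟨rfl⟩
  haveI : SecondCountableTopology X := UniformSpace.secondCountable_of_separable X
  haveI : TopologicalSpace.SeparableSpace C := by infer_instance
  -- Step 1: a simple function with values in C gives an element of Q
  have hsimple : ∀ (ψ : SimpleFunc M X), (∀ x, ψ x ∈ C) → ∀ (hψ : MemLp ψ 2 μ),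
      hψ.toLp ψ ∈ Q := by
    intro ψ hmem hψ
    classical
    set T : Finset X := ψ.range.filter (· ≠ (0 : X)) with hT
    have hfin : ∀ c ∈ T, μ (ψ ⁻¹' {c}) < ∞ := by
      intro c hc
      exact SimpleFunc.measure_preimage_lt_top_of_memLp two_ne_zero ENNReal.ofNat_ne_top ψ hψ c
        (by simpa [hT] using (Finset.mem_filter.mp hc).2)
    -- the indicator pieces
    set e : (c : X) → c ∈ T → Lp X 2 μ := fun c hc =>
      indicatorConstLp 2 (ψ.measurableSet_fiber c) (hfin c hc).ne c with he
    have hsum : hψ.toLp ψ = ∑ c ∈ T.attach, e c.1 c.2 := by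
      apply Lp.ext
      have h1 : ⇑(hψ.toLp ψ) =ᵐ[μ] ψ := MemLp.coeFn_toLp hψ
      have h2 : ⇑(∑ c ∈ T.attach, e c.1 c.2) =ᵐ[μ]
          fun x => ∑ c ∈ T.attach, (ψ ⁻¹' {c.1}).indicator (fun _ => c.1) x := by
        induction T.attach using Finset.induction_on with
        | empty => simp only [Finset.sum_empty]; exact Lp.coeFn_zero X 2 μ
        | insert _ _ hnot ih =>
          rename_i a s
          rw [Finset.sum_insert hnot]
          filter_upwards [Lp.coeFn_add (e a.1 a.2) (∑ c ∈ s, e c.1 c.2), ih,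
            indicatorConstLp_coeFn (p := 2) (hs := ψ.measurableSet_fiber a.1)
              (hμs := (hfin a.1 a.2).ne) (c := a.1)] with x hx1 hx2 hx3
          rw [hx1, Finset.sum_insert hnot]
          simp only [Pi.add_apply, hx2]; simp only [he, hx3]
      refine h1.trans (Filter.EventuallyEq.trans ?_ h2.symm)
      apply Filter.Eventually.of_forall
      intro x
      beta_reduce
      rw [Finset.sum_attach T (fun c => (ψ ⁻¹' {c}).indicator (fun _ => c) x)]
      by_cases hx0 : ψ x = 0
      · rw [hx0]
        refine (Finset.sum_eq_zero ?_).symm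
        intro c hc
        have hc0 : c ≠ 0 := by simpa [hT] using (Finset.mem_filter.mp hc).2
        have hne : ψ x ≠ c := by rw [hx0]; exact fun h => hc0 h.symm
        simp [Set.indicator_apply, hne]
      · have hxT : ψ x ∈ T := Finset.mem_filter.mpr ⟨ψ.mem_range_self x, hx0⟩
        rw [Finset.sum_eq_single_of_mem (ψ x) hxT]
        · simp [Set.indicator_apply]
        · intro c hc hne
          apply Set.indicator_of_notMem
          exact fun h => hne (show ψ x = c from h).symm
    rw [hsum]
    refine Finset.sum_induction _ (· ∈ Q) (fun a b ha hb => hQadd a ha b hb) hQ0 ?_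
    rintro ⟨c, hc⟩ -
    refine subset_closure (conical_mem ?_)
    have hcC : c ∈ C := by
      obtain ⟨x, rfl⟩ := SimpleFunc.mem_range.mp (Finset.mem_filter.mp hc).1
      exact hmem x
    refine ⟨c, hcC, indicatorConstLp 2 (ψ.measurableSet_fiber c) (hfin c hc).ne (1 : ℂ), ?_, ?_⟩
    · filter_upwards [indicatorConstLp_coeFn (p := 2) (hs := ψ.measurableSet_fiber c)
        (hμs := (hfin c hc).ne) (c := (1 : ℂ))] with x hx
      rw [hx, Set.indicator_apply]
      split <;> simp
    · filter_upwards [indicatorConstLp_coeFn (p := 2) (hs := ψ.measurableSet_fiber c)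
        (hμs := (hfin c hc).ne) (c := (1 : ℂ)),
        indicatorConstLp_coeFn (p := 2) (hs := ψ.measurableSet_fiber c)
        (hμs := (hfin c hc).ne) (c := c)] with x hx1 hx2
      rw [hx1, hx2, Set.indicator_apply, Set.indicator_apply]
      split <;> simp
  -- Step 2: any Lp function with values in C a.e. lies in Q
  have hkey : ∀ G : Lp X 2 μ, (∀ᵐ x ∂μ, G x ∈ C) → G ∈ Q := by
    intro G hG
    classical
    have hGsm : StronglyMeasurable ⇑G := Lp.stronglyMeasurable G
    have hsC : MeasurableSet {x | G x ∈ C} := hGsm.measurable hCclosed.measurableSet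
    set g : M → X := fun x => if G x ∈ C then G x else 0 with hg
    have hgm : Measurable g := Measurable.ite hsC hGsm.measurable measurable_const
    have hgG : g =ᵐ[μ] ⇑G := by filter_upwards [hG] with x hx; simp [hg, hx]
    have hg2 : MemLp g 2 μ := (Lp.memLp G).ae_eq hgG.symm
    have hgC : ∀ x, g x ∈ C := fun x => by
      by_cases hx : G x ∈ C <;> simp [hg, hx, h0C]
    haveI : Fact ((1 : ℝ≥0∞) ≤ 2) := ⟨one_le_two⟩
    have htend := SimpleFunc.tendsto_approxOn_Lp_eLpNorm (p := 2) hgm h0C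
      ENNReal.ofNat_ne_top (μ := μ)
      (Filter.Eventually.of_forall fun x => subset_closure (hgC x))
      (by simpa [sub_zero] using hg2.2)
    have hmem2 : ∀ n, MemLp (SimpleFunc.approxOn g hgm C 0 h0C n) 2 μ := fun n =>
      SimpleFunc.memLp_approxOn hgm hg2 h0C MemLp.zero' n
    have htendLp : Filter.Tendsto (fun n => (hmem2 n).toLp _) Filter.atTop
        (nhds (hg2.toLp g)) := by
      apply Lp.tendsto_Lp_of_tendsto_eLpNorm _ hg2
      have heq : ∀ n, eLpNorm (⇑((hmem2 n).toLp _) - g) 2 μ =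
          eLpNorm (⇑(SimpleFunc.approxOn g hgm C 0 h0C n) - g) 2 μ := fun n =>
        eLpNorm_congr_ae (((hmem2 n).coeFn_toLp).sub (Filter.EventuallyEq.refl _ _))
      simpa only [heq] using htend
    have hG_eq : hg2.toLp g = G := Lp.ext (hg2.coeFn_toLp.trans hgG)
    rw [hG_eq] at htendLp
    have hn : ∀ n, (hmem2 n).toLp _ ∈ Q := fun n =>
      hsimple _ (fun x => SimpleFunc.approxOn_mem hgm h0C n x) (hmem2 n)
    exact isClosed_closure.mem_of_tendsto htendLp (Filter.Eventually.of_forall hn)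
  -- Step 3: A maps generators into Q
  intro F hF
  have hgen : ∀ G ∈ S, A G ∈ Q := by
    rintro G ⟨φ, hφ, f, hf0, hGf⟩
    apply hkey
    filter_upwards [hfib G, hf0, hGf, hpos] with x h1 h2 h3 h4
    rw [h1, h3, _root_.map_smul]
    obtain ⟨hre, him⟩ := Complex.nonneg_iff.mp h2
    have hfx : f x = ((f x).re : ℂ) := Complex.ext rfl (by simp [← him])
    rw [hfx, Complex.coe_smul]
    exact hCsmul _ hre _ (h4 φ hφ)
  have hcon : ∀ v ∈ conicalCombinations S, A v ∈ Q := by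
    rintro v ⟨k, a, x, ha, hx, rfl⟩
    rw [map_sum]
    refine Finset.sum_induction _ (· ∈ Q) (fun a b ha hb => hQadd a ha b hb) hQ0 ?_
    intro i _
    rw [A.map_smul_of_tower]
    exact hQsmul _ (ha i) _ (hgen _ (hx i))
  have h1 : A F ∈ closure (A '' conicalCombinations S) :=
    image_closure_subset_closure_image A.continuous ⟨F, hF, rfl⟩
  have h2 : closure (A '' conicalCombinations S) ⊆ Q :=
    closure_minimal (fun y ⟨v, hv, hvy⟩ => hvy ▸ hcon v hv) isClosed_closure
  exact h2 h1
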